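/- Let N and J be positive integers, let V > 0, and let x₁,...,x_N be real numbers with x_n ∈ [0, V] for all n. Let a* be an N × J matrix with entries a*_{ni} ∈ [0,1], Σ_{i=1}^J a*_{ni} = 1 for every n, and Σ_{n=1}^N a*_{ni} > 0 for every i; set μ*_i := (Σ_n a*_{ni} x_n)/(Σ_n a*_{ni}). Let z₁,...,z_N be independent random variables taking values in {1,...,J} with ℙ(z_n = i) = a*_{ni}, and define a_{ni} := 1 if z_n = i and a_{ni} := 0 otherwise. Then for all ε₁, ε₂, ε₃ > 0, the probability that there exists some i ∈ {1,...,J} with |Σ_n a_{ni} − Σ_n a*_{ni}| > ε₁·N or |Σ_n a_{ni} x_n − Σ_n a*_{ni} x_n| > ε₂·N or |Σ_n a_{ni}(x_n − μ*_i)² − Σ_n a*_{ni}(x_n − μ*_i)²| > ε₃·N is at most 2J·exp(−2ε₁²N) + 2J·exp(−2ε₂²N/V²) + 2J·exp(−2ε₃²N/V⁴). -/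

import Mathlib

open Finset MeasureTheory ProbabilityTheory


section Aux
open Real

lemma myDpos {p : ℝ} (hp0 : 0 ≤ p) (hp1 : p ≤ 1) (t : ℝ) : 0 < 1 - p + p * exp t := by
  rcases le_or_gt (exp t) 1 with h | h
  · nlinarith [exp_pos t]
  · nlinarith

lemma bernoulli_mgf_le {p : ℝ} (hp0 : 0 ≤ p) (hp1 : p ≤ 1) (u : ℝ) :
    1 - p + p * exp u ≤ exp (p * u + u ^ 2 / 8) := by
  set D : ℝ → ℝ := fun t => 1 - p + p * exp t with hD
  have hDpos : ∀ t, 0 < D t := fun t => myDpos hp0 hp1 t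
  have hD' : ∀ t, HasDerivAt D (p * exp t) t := fun t =>
    (((Real.hasDerivAt_exp t).const_mul p).const_add (1 - p))
  set φ : ℝ → ℝ := fun t => p + t / 4 - p * exp t / D t with hφ
  have hφ' : ∀ t, HasDerivAt φ
      (1 / 4 - (p * exp t * D t - p * exp t * (p * exp t)) / (D t) ^ 2) t := by
    intro t
    have h1 : HasDerivAt (fun t : ℝ => p + t / 4) (1 / 4) t := by
      simpa using ((hasDerivAt_id t).div_const 4).const_add p
    have h2 : HasDerivAt (fun t => p * exp t / D t)
        ((p * exp t * D t - p * exp t * (p * exp t)) / (D t) ^ 2) t :=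
      ((Real.hasDerivAt_exp t).const_mul p).div (hD' t) (hDpos t).ne'
    exact h1.sub h2
  have hφmono : Monotone φ := by
    apply monotone_of_hasDerivAt_nonneg hφ'
    intro t
    simp only [Pi.zero_apply]
    have hd := hDpos t
    rw [sub_nonneg, div_le_iff₀ (by positivity : (0:ℝ) < D t ^ 2)]
    generalize D t = d at *
    nlinarith [sq_nonneg (d - 2 * (p * exp t))]
  have hφ0 : φ 0 = 0 := by
    simp only [hφ, hD, exp_zero, mul_one]
    field_simp
    ring
  set g : ℝ → ℝ := fun t => p * t + t ^ 2 / 8 - Real.log (D t) with hg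
  have hg' : ∀ t, HasDerivAt g (φ t) t := by
    intro t
    have h1 : HasDerivAt (fun t : ℝ => p * t + t ^ 2 / 8) (p + t / 4) t := by
      have := ((hasDerivAt_pow 2 t).div_const 8).const_add (p * t)
      have h2 := ((hasDerivAt_id t).const_mul p).add ((hasDerivAt_pow 2 t).div_const 8)
      refine h2.congr_deriv ?_
      simp; ring
    have h2 : HasDerivAt (fun t => Real.log (D t)) (p * exp t / D t) t :=
      (hD' t).log (hDpos t).ne'
    exact h1.sub h2
  have hg0 : g 0 = 0 := by
    simp [hg, hD]
  have key : ∀ t, 0 ≤ g t := by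
    intro t
    rcases le_or_gt 0 t with h | h
    · have : MonotoneOn g (Set.Ici 0) := by
        apply monotoneOn_of_hasDerivWithinAt_nonneg (convex_Ici 0)
          (fun s _ => (hg' s).continuousAt.continuousWithinAt)
          (fun s _ => (hg' s).hasDerivWithinAt)
        intro s hs
        rw [interior_Ici] at hs
        have := hφmono (le_of_lt hs)
        rwa [hφ0] at this
      have := this Set.self_mem_Ici h h
      rwa [hg0] at this
    · have : AntitoneOn g (Set.Iic 0) := by
        apply antitoneOn_of_hasDerivWithinAt_nonpos (convex_Iic 0)
          (fun s _ => (hg' s).continuousAt.continuousWithinAt)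
          (fun s _ => (hg' s).hasDerivWithinAt)
        intro s hs
        rw [interior_Iic] at hs
        have := hφmono (le_of_lt hs)
        rwa [hφ0] at this
      have := this h.le Set.self_mem_Iic h.le
      rwa [hg0] at this
  have h : 0 ≤ p * u + u ^ 2 / 8 - Real.log (D u) := key u
  have hlog : Real.log (D u) ≤ p * u + u ^ 2 / 8 := by linarith
  calc D u = exp (Real.log (D u)) := (Real.exp_log (hDpos u)).symm
    _ ≤ exp (p * u + u ^ 2 / 8) := exp_le_exp.mpr hlog

lemma mgf_bernoulli_eq {Ω : Type*} [MeasurableSpace Ω] (μ : Measure Ω) [IsProbabilityMeasure μ]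
    {A : Set Ω} (hA : MeasurableSet A) {p : ℝ} (hp0 : 0 ≤ p)
    (hμA : μ A = ENNReal.ofReal p) (c l : ℝ) :
    mgf (fun ω => Set.indicator A (fun _ => c) ω) μ l
      = 1 - p + p * Real.exp (l * c) := by
  have heq : (fun ω => Real.exp (l * Set.indicator A (fun _ => c) ω))
      = fun ω => Set.indicator A (fun _ => Real.exp (l * c) - 1) ω + 1 := by
    funext ω
    by_cases h : ω ∈ A
    · simp [Set.indicator_of_mem h]
    · simp [Set.indicator_of_notMem h]
  have hp1 : (μ A).toReal = p := by rw [hμA, ENNReal.toReal_ofReal hp0]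
  rw [mgf, heq, integral_add ((integrable_const _).indicator hA) (integrable_const 1)]
  rw [integral_indicator_const _ hA, integral_const]
  simp [hp1]
  rw [measureReal_def, hp1]
  ring

lemma hoeffding_indicator {Ω : Type*} [MeasurableSpace Ω] (μ : Measure Ω)
    [IsProbabilityMeasure μ]
    {N J : ℕ} (hN : 0 < N) (z : Fin N → Ω → Fin J)
    (hmeas : ∀ n, Measurable (z n))
    (hindep : iIndepFun z μ)
    (p : Fin N → ℝ) (hp : ∀ n, p n ∈ Set.Icc (0:ℝ) 1)
    (i : Fin J) (hprob : ∀ n, μ {ω | z n ω = i} = ENNReal.ofReal (p n))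
    (c : Fin N → ℝ) (C : ℝ) (hC : 0 < C) (hc : ∀ n, c n ∈ Set.Icc (0:ℝ) C)
    (t : ℝ) (ht : 0 < t) :
    μ {ω | t < |(∑ n, (if z n ω = i then (1:ℝ) else 0) * c n) - ∑ n, p n * c n|}
      ≤ ENNReal.ofReal (2 * Real.exp (-2 * t^2 / (N * C^2))) := by
  classical
  set X : Fin N → Ω → ℝ := fun n => Set.indicator {ω | z n ω = i} (fun _ => c n) with hX
  set S : Ω → ℝ := fun ω => ∑ n, X n ω with hS
  set m : ℝ := ∑ n, p n * c n with hm
  have hAmeas : ∀ n, MeasurableSet {ω | z n ω = i} := fun n =>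
    (hmeas n) (measurableSet_singleton i)
  have hXmeas : ∀ n, Measurable (X n) := fun n =>
    (measurable_const.indicator (hAmeas n))
  have hcomp : ∀ n, X n = (fun j => if j = i then c n else 0) ∘ z n := by
    intro n; funext ω
    by_cases h : z n ω = i
    · simp [hX, Set.indicator_of_mem, h, Set.mem_setOf_eq]
    · simp [hX, Set.indicator_of_notMem, h, Set.mem_setOf_eq]
  have hXindep : iIndepFun X μ := by
    have := hindep.comp (fun n (j : Fin J) => if j = i then c n else 0)
      (fun n => measurable_of_countable _)
    have hXeq : X = fun n => (fun j => if j = i then c n else 0) ∘ z n := funext hcomp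
    rw [hXeq]
    exact this
  -- bounds on X
  have hX0 : ∀ n ω, 0 ≤ X n ω := by
    intro n ω; exact Set.indicator_nonneg (fun _ _ => (hc n).1) ω
  have hXC : ∀ n ω, X n ω ≤ C := by
    intro n ω
    by_cases h : z n ω = i
    · simpa [hX, Set.indicator_of_mem, h, Set.mem_setOf_eq] using (hc n).2
    · simp [hX, Set.indicator_of_notMem, h, Set.mem_setOf_eq, hC.le]
  -- mgf bound for each n
  have hmgfn : ∀ (l : ℝ) n, mgf (X n) μ l ≤ Real.exp (l * (p n * c n) + l^2 * C^2 / 8) := by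
    intro l n
    rw [hX]
    rw [mgf_bernoulli_eq μ (hAmeas n) (hp n).1 (hprob n) (c n) l]
    refine le_trans (bernoulli_mgf_le (hp n).1 (hp n).2 (l * c n)) ?_
    rw [Real.exp_le_exp]
    have h1 : (l * c n) ^ 2 ≤ l ^ 2 * C ^ 2 := by
      rw [mul_pow]
      have : c n ^ 2 ≤ C ^ 2 := pow_le_pow_left₀ (hc n).1 (hc n).2 2
      nlinarith [sq_nonneg l]
    have : p n * (l * c n) = l * (p n * c n) := by ring
    linarith
  -- mgf of the sum
  have hSsum : S = ∑ n, X n := by funext ω; simp [hS, Finset.sum_apply]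
  have hmgfS : ∀ l : ℝ, mgf S μ l ≤ Real.exp (l * m + N * (l^2 * C^2 / 8)) := by
    intro l
    rw [hSsum, hXindep.mgf_sum hXmeas univ]
    refine le_trans (Finset.prod_le_prod (fun n _ => mgf_nonneg) (fun n _ => hmgfn l n)) ?_
    rw [← Real.exp_sum]
    rw [Real.exp_le_exp]
    rw [Finset.sum_add_distrib, ← Finset.mul_sum, Finset.sum_const, card_univ,
      Fintype.card_fin, nsmul_eq_mul]
  -- integrability
  have hSmeas : Measurable S := by
    apply Finset.measurable_sum
    intro n _
    exact hXmeas n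
  have hint : ∀ l : ℝ, Integrable (fun ω => Real.exp (l * S ω)) μ := by
    intro l
    refine Integrable.mono' (integrable_const (Real.exp (|l| * (N * C)))) 
      ((hSmeas.const_mul l).exp.aestronglyMeasurable) (ae_of_all μ fun ω => ?_)
    rw [Real.norm_eq_abs, Real.abs_exp, Real.exp_le_exp]
    have hS0 : 0 ≤ S ω := Finset.sum_nonneg fun n _ => hX0 n ω
    have hSNC : S ω ≤ N * C := by
      calc S ω ≤ ∑ _n : Fin N, C := Finset.sum_le_sum fun n _ => hXC n ω
        _ = N * C := by rw [Finset.sum_const, card_univ, Fintype.card_fin, nsmul_eq_mul]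
    calc l * S ω ≤ |l| * S ω := mul_le_mul_of_nonneg_right (le_abs_self l) hS0
      _ ≤ |l| * (N * C) := mul_le_mul_of_nonneg_left hSNC (abs_nonneg l)
  -- choose l
  set l : ℝ := 4 * t / (N * C^2) with hl
  have hNR : (0:ℝ) < N := Nat.cast_pos.mpr hN
  have hlpos : 0 < l := by positivity
  have hexp_eq : -l * t + N * (l^2 * C^2 / 8) = -2 * t^2 / (N * C^2) := by
    rw [hl]; field_simp; ring
  -- upper tail
  have hup : (μ {ω | m + t ≤ S ω}).toReal ≤ Real.exp (-2 * t^2 / (N * C^2)) := by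
    refine le_trans (measure_ge_le_exp_mul_mgf (m + t) hlpos.le (hint l)) ?_
    calc Real.exp (-l * (m + t)) * mgf S μ l
        ≤ Real.exp (-l * (m + t)) * Real.exp (l * m + N * (l^2 * C^2 / 8)) := by
          exact mul_le_mul_of_nonneg_left (hmgfS l) (Real.exp_pos _).le
      _ = Real.exp (-l * t + N * (l^2 * C^2 / 8)) := by
          rw [← Real.exp_add]; ring_nf
      _ = Real.exp (-2 * t^2 / (N * C^2)) := by rw [hexp_eq]
  -- lower tail
  have hlow : (μ {ω | S ω ≤ m - t}).toReal ≤ Real.exp (-2 * t^2 / (N * C^2)) := by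
    refine le_trans (measure_le_le_exp_mul_mgf (m - t) (neg_nonpos.mpr hlpos.le) (hint (-l))) ?_
    calc Real.exp (-(-l) * (m - t)) * mgf S μ (-l)
        ≤ Real.exp (-(-l) * (m - t)) * Real.exp ((-l) * m + N * ((-l)^2 * C^2 / 8)) := by
          exact mul_le_mul_of_nonneg_left (hmgfS (-l)) (Real.exp_pos _).le
      _ = Real.exp (-l * t + N * (l^2 * C^2 / 8)) := by
          rw [← Real.exp_add]; ring_nf
      _ = Real.exp (-2 * t^2 / (N * C^2)) := by rw [hexp_eq]
  -- combine
  have hsub : {ω | t < |(∑ n, (if z n ω = i then (1:ℝ) else 0) * c n) - ∑ n, p n * c n|}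
      ⊆ {ω | m + t ≤ S ω} ∪ {ω | S ω ≤ m - t} := by
    intro ω hω
    have hSω : (∑ n, (if z n ω = i then (1:ℝ) else 0) * c n) = S ω := by
      apply Finset.sum_congr rfl
      intro n _
      by_cases h : z n ω = i
      · simp [hX, Set.indicator_of_mem, h, Set.mem_setOf_eq]
      · simp [hX, Set.indicator_of_notMem, h, Set.mem_setOf_eq]
    simp only [Set.mem_setOf_eq] at hω
    rw [hSω] at hω
    rcases lt_abs.mp hω with h | h
    · left; simp only [Set.mem_setOf_eq]; linarith
    · right; simp only [Set.mem_setOf_eq]; linarith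
  refine le_trans (measure_mono hsub) (le_trans (measure_union_le _ _) ?_)
  have h1 : μ {ω | m + t ≤ S ω} ≤ ENNReal.ofReal (Real.exp (-2 * t^2 / (N * C^2))) :=
    (ENNReal.le_ofReal_iff_toReal_le (measure_ne_top μ _) (Real.exp_pos _).le).mpr hup
  have h2 : μ {ω | S ω ≤ m - t} ≤ ENNReal.ofReal (Real.exp (-2 * t^2 / (N * C^2))) :=
    (ENNReal.le_ofReal_iff_toReal_le (measure_ne_top μ _) (Real.exp_pos _).le).mpr hlow
  calc μ {ω | m + t ≤ S ω} + μ {ω | S ω ≤ m - t}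
      ≤ ENNReal.ofReal (Real.exp (-2 * t^2 / (N * C^2)))
        + ENNReal.ofReal (Real.exp (-2 * t^2 / (N * C^2))) := add_le_add h1 h2
    _ = ENNReal.ofReal (2 * Real.exp (-2 * t^2 / (N * C^2))) := by
        rw [← ENNReal.ofReal_add (Real.exp_pos _).le (Real.exp_pos _).le]; ring_nf

end Aux

/-- Paper's Theorem 1: the probability that the randomly rounded classification
scheme is not (ε₁,ε₂,ε₃)-typical is at most
`2J exp(−2ε₁²N) + 2J exp(−2ε₂²N/V²) + 2J exp(−2ε₃²N/V⁴)`. -/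
theorem rounded_scheme_typical_whp
    {Ω : Type*} [MeasurableSpace Ω] (μ : Measure Ω) [IsProbabilityMeasure μ]
    (N J : ℕ) (hN : 0 < N) (hJ : 0 < J) (V : ℝ) (hV : 0 < V)
    (x : Fin N → ℝ) (hx : ∀ n, x n ∈ Set.Icc (0 : ℝ) V)
    (aStar : Fin N → Fin J → ℝ)
    (haStar : ∀ n i, aStar n i ∈ Set.Icc (0 : ℝ) 1)
    (hrow : ∀ n, ∑ i, aStar n i = 1)
    (hcol : ∀ i, 0 < ∑ n, aStar n i)
    (muStar : Fin J → ℝ)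
    (hmuStar : ∀ i, muStar i = (∑ n, aStar n i * x n) / (∑ n, aStar n i))
    (z : Fin N → Ω → Fin J)
    (hmeas : ∀ n, Measurable (z n))
    (hindep : iIndepFun z μ)
    (hprob : ∀ n i, μ {ω | z n ω = i} = ENNReal.ofReal (aStar n i))
    (ε₁ ε₂ ε₃ : ℝ) (hε₁ : 0 < ε₁) (hε₂ : 0 < ε₂) (hε₃ : 0 < ε₃) :
    μ {ω | ∃ i : Fin J,
        ε₁ * N < |(∑ n, (if z n ω = i then (1 : ℝ) else 0)) - ∑ n, aStar n i| ∨
        ε₂ * N < |(∑ n, (if z n ω = i then (1 : ℝ) else 0) * x n)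
                    - ∑ n, aStar n i * x n| ∨
        ε₃ * N < |(∑ n, (if z n ω = i then (1 : ℝ) else 0) * (x n - muStar i) ^ 2)
                    - ∑ n, aStar n i * (x n - muStar i) ^ 2|}
      ≤ ENNReal.ofReal
          (2 * J * Real.exp (-2 * ε₁ ^ 2 * N)
            + 2 * J * Real.exp (-2 * ε₂ ^ 2 * N / V ^ 2)
            + 2 * J * Real.exp (-2 * ε₃ ^ 2 * N / V ^ 4)) := by
  have hNR : (0:ℝ) < N := Nat.cast_pos.mpr hN
  have hNne : (N:ℝ) ≠ 0 := hNR.ne'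
  have hVne : V ≠ 0 := hV.ne'
  -- muStar bounds
  have hmu : ∀ i, muStar i ∈ Set.Icc (0:ℝ) V := by
    intro i
    rw [hmuStar i]
    constructor
    · exact div_nonneg (Finset.sum_nonneg fun n _ =>
        mul_nonneg (haStar n i).1 (hx n).1) (hcol i).le
    · rw [div_le_iff₀ (hcol i), Finset.mul_sum]
      exact Finset.sum_le_sum fun n _ => by
        rw [mul_comm V (aStar n i)]
        exact mul_le_mul_of_nonneg_left (hx n).2 (haStar n i).1
  -- three bounds per class
  set B : ℝ := 2 * Real.exp (-2 * ε₁ ^ 2 * N) + 2 * Real.exp (-2 * ε₂ ^ 2 * N / V ^ 2)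
      + 2 * Real.exp (-2 * ε₃ ^ 2 * N / V ^ 4) with hB
  have key : ∀ i : Fin J,
      μ ({ω | ε₁ * N < |(∑ n, (if z n ω = i then (1 : ℝ) else 0)) - ∑ n, aStar n i|}
        ∪ ({ω | ε₂ * N < |(∑ n, (if z n ω = i then (1 : ℝ) else 0) * x n)
              - ∑ n, aStar n i * x n|}
          ∪ {ω | ε₃ * N < |(∑ n, (if z n ω = i then (1 : ℝ) else 0) * (x n - muStar i) ^ 2)
              - ∑ n, aStar n i * (x n - muStar i) ^ 2|}))
        ≤ ENNReal.ofReal B := by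
    intro i
    have h1 : μ {ω | ε₁ * N < |(∑ n, (if z n ω = i then (1 : ℝ) else 0)) - ∑ n, aStar n i|}
        ≤ ENNReal.ofReal (2 * Real.exp (-2 * ε₁ ^ 2 * N)) := by
      have := hoeffding_indicator μ hN z hmeas hindep (fun n => aStar n i)
        (fun n => haStar n i) i (fun n => hprob n i) (fun _ => (1:ℝ)) 1 one_pos
        (fun n => by constructor <;> norm_num) (ε₁ * N) (by positivity)
      simp only [mul_one] at this
      refine le_trans (le_of_eq ?_) (le_trans this (ENNReal.ofReal_le_ofReal ?_))
      · rfl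
      · have : -2 * (ε₁ * N)^2 / (N * 1^2) = -2 * ε₁ ^ 2 * N := by
          field_simp
        rw [this]
    have h2 : μ {ω | ε₂ * N < |(∑ n, (if z n ω = i then (1 : ℝ) else 0) * x n)
          - ∑ n, aStar n i * x n|}
        ≤ ENNReal.ofReal (2 * Real.exp (-2 * ε₂ ^ 2 * N / V ^ 2)) := by
      have := hoeffding_indicator μ hN z hmeas hindep (fun n => aStar n i)
        (fun n => haStar n i) i (fun n => hprob n i) x V hV hx (ε₂ * N) (by positivity)
      refine le_trans this (ENNReal.ofReal_le_ofReal ?_)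
      have : -2 * (ε₂ * N)^2 / (N * V^2) = -2 * ε₂ ^ 2 * N / V ^ 2 := by
        field_simp
      rw [this]
    have h3 : μ {ω | ε₃ * N < |(∑ n, (if z n ω = i then (1 : ℝ) else 0) * (x n - muStar i) ^ 2)
          - ∑ n, aStar n i * (x n - muStar i) ^ 2|}
        ≤ ENNReal.ofReal (2 * Real.exp (-2 * ε₃ ^ 2 * N / V ^ 4)) := by
      have hc : ∀ n, (x n - muStar i) ^ 2 ∈ Set.Icc (0:ℝ) (V ^ 2) := by
        intro n
        refine ⟨sq_nonneg _, ?_⟩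
        have h1 := (hx n).1; have h2 := (hx n).2
        have h3 := (hmu i).1; have h4 := (hmu i).2
        nlinarith
      have := hoeffding_indicator μ hN z hmeas hindep (fun n => aStar n i)
        (fun n => haStar n i) i (fun n => hprob n i) (fun n => (x n - muStar i)^2)
        (V^2) (by positivity) hc (ε₃ * N) (by positivity)
      refine le_trans this (ENNReal.ofReal_le_ofReal ?_)
      have : -2 * (ε₃ * N)^2 / (N * (V^2)^2) = -2 * ε₃ ^ 2 * N / V ^ 4 := by
        field_simp
      rw [this]
    refine le_trans (measure_union_le _ _) ?_
    refine le_trans (add_le_add h1 (le_trans (measure_union_le _ _) (add_le_add h2 h3))) ?_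
    rw [← ENNReal.ofReal_add (by positivity) (by positivity),
      ← ENNReal.ofReal_add (by positivity) (by positivity)]
    rw [hB, add_assoc]
  -- union bound
  have hsub : {ω | ∃ i : Fin J,
        ε₁ * N < |(∑ n, (if z n ω = i then (1 : ℝ) else 0)) - ∑ n, aStar n i| ∨
        ε₂ * N < |(∑ n, (if z n ω = i then (1 : ℝ) else 0) * x n)
                    - ∑ n, aStar n i * x n| ∨
        ε₃ * N < |(∑ n, (if z n ω = i then (1 : ℝ) else 0) * (x n - muStar i) ^ 2)
                    - ∑ n, aStar n i * (x n - muStar i) ^ 2|}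
      ⊆ ⋃ i : Fin J,
        ({ω | ε₁ * N < |(∑ n, (if z n ω = i then (1 : ℝ) else 0)) - ∑ n, aStar n i|}
        ∪ ({ω | ε₂ * N < |(∑ n, (if z n ω = i then (1 : ℝ) else 0) * x n)
              - ∑ n, aStar n i * x n|}
          ∪ {ω | ε₃ * N < |(∑ n, (if z n ω = i then (1 : ℝ) else 0) * (x n - muStar i) ^ 2)
              - ∑ n, aStar n i * (x n - muStar i) ^ 2|})) := by
    intro ω hω
    obtain ⟨i, hi⟩ := hω
    refine Set.mem_iUnion.mpr ⟨i, ?_⟩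
    rcases hi with h | h | h
    · exact Set.mem_union_left _ h
    · exact Set.mem_union_right _ (Set.mem_union_left _ h)
    · exact Set.mem_union_right _ (Set.mem_union_right _ h)
  refine le_trans (measure_mono hsub) (le_trans (measure_iUnion_le _) ?_)
  rw [tsum_fintype]
  refine le_trans (Finset.sum_le_sum fun i _ => key i) ?_
  rw [Finset.sum_const, card_univ, Fintype.card_fin, nsmul_eq_mul]
  rw [← ENNReal.ofReal_natCast J, ← ENNReal.ofReal_mul (Nat.cast_nonneg J)]
  refine ENNReal.ofReal_le_ofReal (le_of_eq ?_)
  rw [hB]; ring
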